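/- For every integer k ≥ 3, k^((k+1)!) > ((k+1)!)^k + (k+1)^(k!). -/

import Mathlib

lemma fact_le_pow_pred : ∀ n : ℕ, Nat.factorial (n + 1) ≤ (n + 1) ^ n
  | 0 => by simp [Nat.factorial]
  | n + 1 => by
    calc Nat.factorial (n + 2) = (n + 2) * Nat.factorial (n + 1) := rfl
      _ ≤ (n + 2) * (n + 1) ^ n :=
          Nat.mul_le_mul_left _ (fact_le_pow_pred n)
      _ ≤ (n + 2) * (n + 2) ^ n :=
          Nat.mul_le_mul_left _ (Nat.pow_le_pow_left (by omega) n)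
      _ = (n + 2) ^ (n + 1) := by ring

theorem stmt_2 (k : ℕ) (hk : 3 ≤ k) :
    k ^ (Nat.factorial (k + 1)) >
      (Nat.factorial (k + 1)) ^ k + (k + 1) ^ (Nat.factorial k) := by
  have hk0 : 0 < k := by omega
  have hfk : 2 * k ≤ Nat.factorial k := by
    obtain ⟨m, rfl⟩ : ∃ m, k = m + 1 := ⟨k - 1, by omega⟩
    have h2 : 2 ≤ Nat.factorial m := by
      calc 2 = Nat.factorial 2 := rfl
        _ ≤ Nat.factorial m := Nat.factorial_le (by omega)
    rw [Nat.factorial_succ]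
    nlinarith
  set N := Nat.factorial (k + 1) with hN
  have hNe : N = (k + 1) * Nat.factorial k := Nat.factorial_succ k
  have hk1 : k + 1 ≤ k ^ 2 := by nlinarith
  -- exponent bounds
  have e1 : 2 * Nat.factorial k ≤ N - 1 := by
    have hF : 1 ≤ Nat.factorial k := Nat.one_le_iff_ne_zero.mpr (Nat.factorial_ne_zero k)
    have h4 : 4 * Nat.factorial k ≤ N := by rw [hNe]; nlinarith
    omega
  have e2 : 2 * k ^ 2 ≤ N - 1 := by
    have h5 : 2 * k ^ 2 + 2 * k ≤ N := by
      have : (k + 1) * (2 * k) ≤ (k + 1) * Nat.factorial k :=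
        Nat.mul_le_mul_left _ hfk
      rw [hNe]; nlinarith
    omega
  -- bound 1
  have h1 : (k + 1) ^ Nat.factorial k ≤ k ^ (N - 1) := by
    calc (k + 1) ^ Nat.factorial k ≤ (k ^ 2) ^ Nat.factorial k :=
          Nat.pow_le_pow_left hk1 _
      _ = k ^ (2 * Nat.factorial k) := by rw [← pow_mul]
      _ ≤ k ^ (N - 1) := Nat.pow_le_pow_right (by omega) e1
  -- bound 2
  have h2 : N ^ k ≤ k ^ (N - 1) := by
    calc N ^ k ≤ ((k + 1) ^ k) ^ k := Nat.pow_le_pow_left (fact_le_pow_pred k) k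
      _ = (k + 1) ^ (k * k) := by rw [← pow_mul]
      _ ≤ (k ^ 2) ^ (k * k) := Nat.pow_le_pow_left hk1 _
      _ = k ^ (2 * k ^ 2) := by rw [← pow_mul]; ring_nf
      _ ≤ k ^ (N - 1) := Nat.pow_le_pow_right (by omega) e2
  have hNpos : 1 ≤ N := Nat.one_le_iff_ne_zero.mpr (Nat.factorial_ne_zero (k + 1))
  calc N ^ k + (k + 1) ^ Nat.factorial k ≤ k ^ (N - 1) + k ^ (N - 1) :=
        Nat.add_le_add h2 h1
    _ = 2 * k ^ (N - 1) := by ring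
    _ < k * k ^ (N - 1) := by
        have : 0 < k ^ (N - 1) := Nat.pow_pos (by omega)
        exact (Nat.mul_lt_mul_right this).mpr (by omega)
    _ = k ^ N := by rw [← pow_succ']; congr 1; omega
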